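/- Let α, β, γ, ρ ∈ ℂ with Re(α) > 0, Re(β) > 0, Re(γ) > 0, Re(ρ) > 0, let q > 0 with q < Re(α) + 1, and let t < x be real numbers. Then for every z ∈ ℂ, (1/Γ(ρ)) ∫_t^x (x − s)^{ρ − 1} (s − t)^{β − 1} E_{α,β}^{γ,q}(z (s − t)^{α}) ds = Σ_{n=0}^∞ (x − t)^{ρ + β + n α − 1} (γ)_{qn} z^n / ( n! Γ(ρ + β + α n) ). -/

import Mathlib

open Complex

/-- The generalized Pochhammer symbol `(γ)_x = Γ(γ + x)/Γ(γ)`. -/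
noncomputable def pochG (γ x : ℂ) : ℂ := Complex.Gamma (γ + x) / Complex.Gamma γ

/-- The extended beta function `B(x, y; A; m)`. -/
noncomputable def extBetaM (x y A : ℂ) (m : ℝ) : ℂ :=
  ∫ t in (0:ℝ)..1, (t : ℂ) ^ (x - 1) * ((1 - t : ℝ) : ℂ) ^ (y - 1) *
    Complex.exp (-A / ((t : ℂ) ^ (m : ℂ) * ((1 - t : ℝ) : ℂ) ^ (m : ℂ)))

/-- The Shukla–Prajapati generalized Mittag-Leffler function `E_{α,β}^{γ,q}(z)`. -/
noncomputable def spML (α β γ : ℂ) (q : ℝ) (z : ℂ) : ℂ :=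
  ∑' n : ℕ, pochG γ ((q * n : ℝ) : ℂ) * z ^ n /
    (Complex.Gamma (α * n + β) * (n.factorial : ℂ))

open MeasureTheory Set Filter Finset

lemma norm_Gamma_le {s : ℂ} (hs : 0 < s.re) : ‖Complex.Gamma s‖ ≤ Real.Gamma s.re := by
  rw [Complex.Gamma_eq_integral hs, Real.Gamma_eq_integral hs, Complex.GammaIntegral]
  refine (norm_integral_le_integral_norm _).trans_eq ?_
  refine setIntegral_congr_fun measurableSet_Ioi fun y hy => ?_
  rw [norm_mul, Complex.norm_real, Real.norm_eq_abs,
    Complex.norm_cpow_eq_rpow_re_of_pos hy, Complex.sub_re, Complex.one_re,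
    abs_of_pos (Real.exp_pos _)]

lemma prod_abs_le {s : ℂ} (hs : 2 ≤ s.re) (n : ℕ) :
    (∏ j ∈ Finset.range (n+1), ‖s + j‖)
      ≤ (∏ j ∈ Finset.range (n+1), (s.re + j)) * Real.exp (s.im ^ 2 / (2 * (s.re - 1))) := by
  set x := s.re with hxdef
  set y := s.im with hydef
  have hx1 : (1:ℝ) < x := by linarith
  have h1 : ∀ j ∈ Finset.range (n+1),
      ‖s + j‖ ≤ (x + j) * Real.exp (y^2/(2*(x+j)^2)) := by
    intro j _
    have hxj : (0:ℝ) < x + j := by positivity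
    refine le_of_pow_le_pow_left₀ two_ne_zero (by positivity) ?_
    rw [mul_pow, Complex.sq_norm, Complex.normSq_apply]
    have hre : (s + j).re = x + j := by simp [hxdef]
    have him : (s + j).im = y := by simp [hydef]
    rw [hre, him]
    have h2 : Real.exp (y^2/(2*(x+j)^2)) ^ 2 = Real.exp (y^2/(x+j)^2) := by
      rw [← Real.exp_nat_mul]
      congr 1
      field_simp
      ring
    rw [h2]
    have h3 : y^2/(x+j)^2 + 1 ≤ Real.exp (y^2/(x+j)^2) := Real.add_one_le_exp _
    have h4 : (x+j)^2 * (y^2/(x+j)^2 + 1) = y^2 + (x+j)^2 := by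
      field_simp
    nlinarith [mul_le_mul_of_nonneg_left h3 (sq_nonneg (x+j))]
  calc (∏ j ∈ Finset.range (n+1), ‖s + j‖)
      ≤ ∏ j ∈ Finset.range (n+1), ((x + j) * Real.exp (y^2/(2*(x+j)^2))) :=
        Finset.prod_le_prod (fun j _ => norm_nonneg _) h1
    _ = (∏ j ∈ Finset.range (n+1), (x + j)) *
          Real.exp (∑ j ∈ Finset.range (n+1), y^2/(2*(x+j)^2)) := by
        rw [Finset.prod_mul_distrib, Real.exp_sum]
    _ ≤ (∏ j ∈ Finset.range (n+1), (x + j)) * Real.exp (y ^ 2 / (2 * (x - 1))) := by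
        refine mul_le_mul_of_nonneg_left ?_
          (Finset.prod_nonneg fun j _ => by positivity)
        refine Real.exp_le_exp.2 ?_
        have htel : ∑ j ∈ Finset.range (n+1), (1:ℝ)/(x+j)^2 ≤ 1/(x-1) := by
          have hle : ∀ j ∈ Finset.range (n+1),
              (1:ℝ)/(x+j)^2 ≤ 1/(x-1+j) - 1/(x+j) := by
            intro j _
            have hj : (0:ℝ) ≤ (j:ℝ) := j.cast_nonneg
            have h1 : (0:ℝ) < x - 1 + j := by linarith
            have h2 : (0:ℝ) < x + j := by linarith
            rw [div_sub_div _ _ h1.ne' h2.ne', one_mul, mul_one]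
            rw [div_le_div_iff₀ (by positivity) (by positivity)]
            nlinarith
          refine (Finset.sum_le_sum hle).trans ?_
          set f : ℕ → ℝ := fun j => 1/(x-1+j) with hf
          have heq : ∀ j : ℕ, (1:ℝ)/(x-1+j) - 1/(x+j) = f j - f (j+1) := by
            intro j
            simp only [hf]
            congr 2
            push_cast; ring
          calc ∑ j ∈ Finset.range (n+1), ((1:ℝ)/(x-1+j) - 1/(x+j))
              = ∑ j ∈ Finset.range (n+1), (f j - f (j+1)) :=
                Finset.sum_congr rfl fun j _ => heq j
            _ = f 0 - f (n+1) := Finset.sum_range_sub' f (n+1)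
            _ ≤ 1/(x-1) := by
                have hd : (0:ℝ) < x - 1 + ((n:ℝ)+1) := by
                  have : (0:ℝ) ≤ (n:ℝ) := n.cast_nonneg
                  linarith
                have h5 : (0:ℝ) ≤ f (n+1) := by
                  simp only [hf]
                  push_cast
                  exact le_of_lt (by positivity)
                simp only [hf, Nat.cast_zero, add_zero]
                linarith
        have hsum : ∑ j ∈ Finset.range (n+1), y^2/(2*(x+j)^2)
            = (y^2/2) * ∑ j ∈ Finset.range (n+1), (1:ℝ)/(x+j)^2 := by
          rw [Finset.mul_sum]
          refine Finset.sum_congr rfl fun j _ => by field_simp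
        rw [hsum]
        calc (y^2/2) * ∑ j ∈ Finset.range (n+1), (1:ℝ)/(x+j)^2
            ≤ (y^2/2) * (1/(x-1)) := mul_le_mul_of_nonneg_left htel (by positivity)
          _ = y^2/(2*(x-1)) := by
              rw [div_mul_div_comm, mul_one]

lemma Gamma_re_le_norm_mul_exp {s : ℂ} (hs : 2 ≤ s.re) :
    Real.Gamma s.re ≤ ‖Complex.Gamma s‖ * Real.exp (s.im ^ 2 / (2 * (s.re - 1))) := by
  set x := s.re with hxdef
  set K := Real.exp (s.im ^ 2 / (2 * (x - 1))) with hK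
  have hx0 : (0:ℝ) < x := by linarith
  have key : ∀ n : ℕ, 1 ≤ n → ‖Complex.GammaSeq (x:ℂ) n‖ ≤ ‖Complex.GammaSeq s n‖ * K := by
    intro n hn
    have hnpos : (0:ℝ) < n := by exact_mod_cast hn
    rw [Complex.GammaSeq, Complex.GammaSeq]
    have habs : ∀ w : ℂ, ‖(n:ℂ) ^ w * (n.factorial : ℂ) / ∏ j ∈ Finset.range (n + 1), (w + j)‖
        = ‖(n:ℂ) ^ w‖ * (n.factorial : ℝ) /
          ∏ j ∈ Finset.range (n + 1), ‖w + j‖ := by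
      intro w
      rw [norm_div, norm_mul, norm_prod]
      norm_num
    rw [habs, habs]
    have hcast : (n:ℂ) = ((n:ℝ):ℂ) := by norm_cast
    have hnx : ‖(n:ℂ) ^ (x:ℂ)‖ = (n:ℝ) ^ x := by
      rw [hcast, Complex.norm_cpow_eq_rpow_re_of_pos hnpos, Complex.ofReal_re]
    have hns : ‖(n:ℂ) ^ s‖ = (n:ℝ) ^ x := by
      rw [hcast, Complex.norm_cpow_eq_rpow_re_of_pos hnpos, hxdef]
    rw [hnx, hns]
    have hPx : (∏ j ∈ Finset.range (n + 1), ‖(x:ℂ) + j‖)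
        = ∏ j ∈ Finset.range (n + 1), (x + j) := by
      refine Finset.prod_congr rfl fun j _ => ?_
      have : ((x:ℂ) + j) = ((x + j : ℝ) : ℂ) := by push_cast; ring
      rw [this, Complex.norm_real, Real.norm_eq_abs, abs_of_pos (by positivity)]
    rw [hPx]
    have hPs : (0:ℝ) < ∏ j ∈ Finset.range (n + 1), ‖s + j‖ := by
      refine Finset.prod_pos fun j _ => ?_
      refine norm_pos_iff.2 ?_
      intro h
      have := congrArg Complex.re h
      simp [hxdef] at this
      have hj : (0:ℝ) ≤ (j:ℝ) := j.cast_nonneg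
      rw [← hxdef] at this
      nlinarith
    have hPxpos : (0:ℝ) < ∏ j ∈ Finset.range (n + 1), (x + j) :=
      Finset.prod_pos fun j _ => by positivity
    have hA : (0:ℝ) ≤ (n:ℝ) ^ x * (n.factorial : ℝ) := by positivity
    have hple := prod_abs_le hs n
    rw [div_mul_eq_mul_div, div_le_div_iff₀ hPxpos hPs]
    calc (n:ℝ) ^ x * (n.factorial : ℝ) * (∏ j ∈ Finset.range (n + 1), ‖s + j‖)
        ≤ (n:ℝ) ^ x * (n.factorial : ℝ) * ((∏ j ∈ Finset.range (n + 1), (x + j)) * K) :=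
          mul_le_mul_of_nonneg_left hple hA
      _ = (n:ℝ) ^ x * (n.factorial : ℝ) * K * (∏ j ∈ Finset.range (n + 1), (x + j)) := by ring
  have t1 : Filter.Tendsto (fun n => ‖Complex.GammaSeq (x:ℂ) n‖) Filter.atTop
      (nhds ‖Complex.Gamma (x:ℂ)‖) := (Complex.GammaSeq_tendsto_Gamma (x:ℂ)).norm
  have t2 : Filter.Tendsto (fun n => ‖Complex.GammaSeq s n‖ * K) Filter.atTop
      (nhds (‖Complex.Gamma s‖ * K)) := (Complex.GammaSeq_tendsto_Gamma s).norm.mul_const K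
  have hle := le_of_tendsto_of_tendsto t1 t2 (Filter.eventually_atTop.2 ⟨1, key⟩)
  rwa [Complex.Gamma_ofReal, Complex.norm_real, Real.norm_eq_abs,
    abs_of_pos (Real.Gamma_pos_of_pos hx0)] at hle

lemma Gamma_interp {u v t : ℝ} (hu : 0 < u) (hv : 0 < v) (ht0 : 0 ≤ t) (ht1 : t ≤ 1) :
    Real.Gamma ((1-t)*u + t*v) ≤ Real.Gamma u ^ (1-t) * Real.Gamma v ^ t := by
  have hc := Real.convexOn_log_Gamma.2 (Set.mem_Ioi.2 hu) (Set.mem_Ioi.2 hv)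
    (by linarith : (0:ℝ) ≤ 1 - t) ht0 (by ring)
  simp only [smul_eq_mul, Function.comp_apply] at hc
  have harg : 0 < (1-t)*u + t*v := by
    rcases lt_or_eq_of_le ht1 with h | h
    · have h1 : 0 < (1-t)*u := mul_pos (by linarith) hu
      nlinarith [mul_nonneg ht0 hv.le]
    · rw [h]; simpa using hv
  calc Real.Gamma ((1-t)*u + t*v)
      = Real.exp (Real.log (Real.Gamma ((1-t)*u + t*v))) :=
        (Real.exp_log (Real.Gamma_pos_of_pos harg)).symm
    _ ≤ Real.exp ((1-t) * Real.log (Real.Gamma u) + t * Real.log (Real.Gamma v)) :=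
        Real.exp_le_exp.2 hc
    _ = Real.Gamma u ^ (1-t) * Real.Gamma v ^ t := by
        rw [Real.exp_add, Real.rpow_def_of_pos (Real.Gamma_pos_of_pos hu),
          Real.rpow_def_of_pos (Real.Gamma_pos_of_pos hv), mul_comm (1-t), mul_comm t]

lemma Gamma_add_nat_eq {a : ℝ} (ha : 0 < a) (m : ℕ) :
    Real.Gamma (a + m) = Real.Gamma a * ∏ i ∈ Finset.range m, (a + i) := by
  induction m with
  | zero => simp
  | succ m ih =>
    have hm : a + m ≠ 0 := by positivity
    have : a + (m+1 : ℕ) = (a + m) + 1 := by push_cast; ring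
    rw [this, Real.Gamma_add_one hm, ih, Finset.prod_range_succ]
    ring

lemma Gamma_frac_upper {a : ℝ} (ha : 0 < a) {c : ℝ} (hc0 : 0 ≤ c) (hc1 : c ≤ 1) :
    Real.Gamma (a + c) ≤ Real.Gamma a * a ^ c := by
  have h := Gamma_interp ha (by linarith : (0:ℝ) < a + 1) hc0 hc1
  have harg : (1-c)*a + c*(a+1) = a + c := by ring
  rw [harg, Real.Gamma_add_one ha.ne'] at h
  refine h.trans_eq ?_
  have hGa : (0:ℝ) < Real.Gamma a := Real.Gamma_pos_of_pos ha
  rw [Real.mul_rpow ha.le hGa.le, mul_comm (a ^ c), ← mul_assoc,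
    ← Real.rpow_add hGa]
  norm_num

lemma Gamma_frac_lower {a : ℝ} (ha : 1 ≤ a) {c : ℝ} (hc0 : 0 ≤ c) (hc1 : c ≤ 1) :
    Real.Gamma a * a ^ c / 2 ≤ Real.Gamma (a + c) := by
  have ha0 : (0:ℝ) < a := by linarith
  have hac : (0:ℝ) < a + c := by linarith
  have h := Gamma_interp hac (by linarith : (0:ℝ) < a + c + 1) (by linarith : (0:ℝ) ≤ 1 - c)
    (by linarith : 1 - c ≤ 1)
  have harg : (1-(1-c))*(a+c) + (1-c)*(a+c+1) = a + 1 := by ring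
  rw [harg] at h
  have h2 : (1 : ℝ) - (1 - c) = c := by ring
  rw [h2, Real.Gamma_add_one ha0.ne', Real.Gamma_add_one hac.ne'] at h
  -- h : a * Γ a ≤ Γ(a+c)^c * ((a+c)*Γ(a+c))^(1-c)
  have hG : (0:ℝ) < Real.Gamma (a+c) := Real.Gamma_pos_of_pos hac
  have h3 : Real.Gamma (a+c) ^ c * ((a+c) * Real.Gamma (a+c)) ^ (1-c)
      = Real.Gamma (a+c) * (a+c) ^ (1-c) := by
    rw [Real.mul_rpow hac.le hG.le, ← mul_assoc, mul_comm (Real.Gamma (a+c) ^ c),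
      mul_assoc, ← Real.rpow_add hG]
    norm_num
    ring
  rw [h3] at h
  -- h : a * Γ a ≤ Γ(a+c) * (a+c)^(1-c)
  have hb : a ^ c * (a+c) ^ (1-c) ≤ 2 * a := by
    have h4 : a ^ c ≤ (a+c) ^ c := Real.rpow_le_rpow ha0.le (by linarith) hc0
    have h5 : a ^ c * (a+c) ^ (1-c) ≤ (a+c) ^ c * (a+c) ^ (1-c) :=
      mul_le_mul_of_nonneg_right h4 (Real.rpow_nonneg hac.le _)
    rw [← Real.rpow_add hac] at h5
    norm_num at h5
    linarith
  have hpow : (0:ℝ) < (a+c) ^ (1-c) := Real.rpow_pos_of_pos hac _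
  have hGa : (0:ℝ) < Real.Gamma a := Real.Gamma_pos_of_pos ha0
  rw [div_le_iff₀ (by norm_num : (0:ℝ) < 2)]
  -- goal: Γ a * a^c ≤ Γ(a+c) * 2
  have hap : (0:ℝ) < a ^ c := Real.rpow_pos_of_pos ha0 _
  nlinarith [mul_le_mul_of_nonneg_left hb hGa.le]

lemma Gamma_ratio_upper {a c : ℝ} (ha : 0 < a) (hc : 0 ≤ c) :
    Real.Gamma (a + c) ≤ Real.Gamma a * (a + c) ^ c := by
  set m := ⌊c⌋₊ with hm
  set c' := c - m with hc'
  have hmc : (m:ℝ) ≤ c := Nat.floor_le hc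
  have hc'0 : 0 ≤ c' := sub_nonneg.2 hmc
  have hc'1 : c' ≤ 1 := by
    have := Nat.lt_floor_add_one c
    rw [hc']; push_cast at this ⊢; linarith
  have hac' : (0:ℝ) < a + c' := by linarith
  have hac : (0:ℝ) < a + c := by linarith
  have hsplit : a + c = (a + c') + m := by rw [hc']; ring
  rw [hsplit, Gamma_add_nat_eq hac']
  have h1 : Real.Gamma (a + c') ≤ Real.Gamma a * a ^ c' := Gamma_frac_upper ha hc'0 hc'1
  have h2 : ∏ i ∈ Finset.range m, (a + c' + i) ≤ (a + c) ^ m := by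
    calc ∏ i ∈ Finset.range m, (a + c' + i)
        ≤ ∏ _i ∈ Finset.range m, (a + c) := by
          refine Finset.prod_le_prod (fun i _ => by positivity) fun i hi => ?_
          have h3 : (i:ℝ) + 1 ≤ (m:ℝ) := by exact_mod_cast Finset.mem_range.1 hi
          rw [hc'] at *
          linarith
      _ = (a + c) ^ m := by rw [Finset.prod_const, Finset.card_range]
  have hprodnn : (0:ℝ) ≤ ∏ i ∈ Finset.range m, (a + c' + i) :=
    Finset.prod_nonneg fun i _ => by positivity
  calc Real.Gamma (a + c') * ∏ i ∈ Finset.range m, (a + c' + i)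
      ≤ (Real.Gamma a * a ^ c') * (a + c) ^ m := by
        refine mul_le_mul h1 h2 hprodnn (by positivity)
    _ ≤ (Real.Gamma a * (a + c) ^ c') * (a + c) ^ m := by
        have h4 : a ^ c' ≤ (a + c) ^ c' := Real.rpow_le_rpow ha.le (by linarith) hc'0
        have hGa : (0:ℝ) < Real.Gamma a := Real.Gamma_pos_of_pos ha
        have := mul_le_mul_of_nonneg_right
          (mul_le_mul_of_nonneg_left h4 hGa.le) (pow_nonneg hac.le m)
        linarith
    _ = Real.Gamma a * ((a + c') + m) ^ c := by
        rw [mul_assoc, ← Real.rpow_natCast (a+c) m, ← Real.rpow_add hac, ← hsplit]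
        congr 2
        rw [hc']; ring

lemma Gamma_ratio_lower {a c : ℝ} (ha : 1 ≤ a) (hc : 0 ≤ c) :
    Real.Gamma a * a ^ c / 2 ≤ Real.Gamma (a + c) := by
  set m := ⌊c⌋₊ with hm
  set c' := c - m with hc'
  have hmc : (m:ℝ) ≤ c := Nat.floor_le hc
  have hc'0 : 0 ≤ c' := sub_nonneg.2 hmc
  have hc'1 : c' ≤ 1 := by
    have := Nat.lt_floor_add_one c
    rw [hc']; push_cast at this ⊢; linarith
  have ha0 : (0:ℝ) < a := by linarith
  have hac' : (0:ℝ) < a + c' := by linarith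
  have hsplit : a + c = (a + c') + m := by rw [hc']; ring
  rw [hsplit, Gamma_add_nat_eq hac']
  have h1 : Real.Gamma a * a ^ c' / 2 ≤ Real.Gamma (a + c') := Gamma_frac_lower ha hc'0 hc'1
  have h2 : (a:ℝ) ^ m ≤ ∏ i ∈ Finset.range m, (a + c' + i) := by
    calc (a:ℝ) ^ m = ∏ _i ∈ Finset.range m, a := by
          rw [Finset.prod_const, Finset.card_range]
      _ ≤ ∏ i ∈ Finset.range m, (a + c' + i) := by
          refine Finset.prod_le_prod (fun i _ => ha0.le) fun i hi => by
            have : (0:ℝ) ≤ (i:ℝ) := i.cast_nonneg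
            linarith
  have hGnn : (0:ℝ) ≤ Real.Gamma a * a ^ c' / 2 := by
    have := Real.Gamma_pos_of_pos ha0
    have := Real.rpow_pos_of_pos ha0 c'
    positivity
  calc Real.Gamma a * a ^ c / 2
      = (Real.Gamma a * a ^ c' / 2) * a ^ m := by
        rw [← Real.rpow_natCast a m, ← mul_div_right_comm, mul_assoc, ← Real.rpow_add ha0]
        congr 3
        rw [hc']; ring
    _ ≤ Real.Gamma (a + c') * ∏ i ∈ Finset.range m, (a + c' + i) :=
        mul_le_mul h1 h2 (by positivity) (Real.Gamma_pos_of_pos hac').le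
section
variable {a b c q R : ℝ}

lemma summable_gamma_ratio (ha : 0 < a) (hb : 0 < b) (hc : 0 < c)
    (hq : 0 < q) (hqc : q < c + 1) (hR : 0 ≤ R) :
    Summable (fun n : ℕ => Real.Gamma (a + q*n) * R^n / (Real.Gamma (b + c*n) * n.factorial)) := by
  set f : ℕ → ℝ := fun n => Real.Gamma (a + q*n) * R^n / (Real.Gamma (b + c*n) * n.factorial)
    with hf
  set φ : ℕ → ℝ := fun n => 2*R*(a+q*n+q)^q/((b+c*n)^c*(n+1)) with hφ
  have hfnn : ∀ n, 0 ≤ f n := by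
    intro n
    have h1 : (0:ℝ) < a + q*n := by positivity
    have h2 : (0:ℝ) < b + c*n := by positivity
    have := Real.Gamma_pos_of_pos h1
    have := Real.Gamma_pos_of_pos h2
    have h3 : (0:ℝ) < (n.factorial:ℝ) := by exact_mod_cast n.factorial_pos
    positivity
  have hφnn : ∀ n, 0 ≤ φ n := by
    intro n
    have h2 : (0:ℝ) < b + c*n := by positivity
    have h4 := Real.rpow_pos_of_pos h2 c
    have h3 : (0:ℝ) ≤ (a+q*n+q)^q := Real.rpow_nonneg (by positivity) q
    positivity
  -- φ tends to 0
  have hφ0 : Filter.Tendsto φ Filter.atTop (nhds 0) := by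
    have hbound : ∀ n : ℕ, 1 ≤ n → φ n ≤ (2*R*(a+2*q)^q/c^c) * (n:ℝ)^(q-c-1) := by
      intro n hn
      have hn1 : (1:ℝ) ≤ (n:ℝ) := by exact_mod_cast hn
      have hn0 : (0:ℝ) < (n:ℝ) := by linarith
      have hgb : (0:ℝ) < b + c*n := by positivity
      have hnum : (a+q*n+q)^q ≤ (a+2*q)^q * (n:ℝ)^q := by
        rw [← Real.mul_rpow (by positivity) hn0.le]
        refine Real.rpow_le_rpow (by positivity) ?_ hq.le
        nlinarith
      have hden : c^c * (n:ℝ)^c ≤ (b+c*n)^c := by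
        rw [← Real.mul_rpow hc.le hn0.le]
        refine Real.rpow_le_rpow (by positivity) (by nlinarith) hc.le
      have hQ : (0:ℝ) < (b+c*n)^c := Real.rpow_pos_of_pos hgb _
      calc φ n ≤ 2*R*((a+2*q)^q * (n:ℝ)^q)/((b+c*n)^c*(n+1)) := by
            rw [hφ]
            have hd : (0:ℝ) < (b+c*n)^c*((n:ℝ)+1) := by positivity
            have hmul : 2*R*(a+q*n+q)^q ≤ 2*R*((a+2*q)^q * (n:ℝ)^q) :=
              mul_le_mul_of_nonneg_left hnum (by positivity)
            exact (div_le_div_iff_of_pos_right hd).2 hmul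
        _ ≤ 2*R*((a+2*q)^q * (n:ℝ)^q)/(c^c * (n:ℝ)^c * (n:ℝ)) := by
            refine div_le_div_of_nonneg_left (by positivity) (by positivity) ?_
            calc c^c * (n:ℝ)^c * (n:ℝ) ≤ (b+c*n)^c * (n:ℝ) :=
                  mul_le_mul_of_nonneg_right hden hn0.le
              _ ≤ (b+c*n)^c * ((n:ℝ)+1) := by
                  refine mul_le_mul_of_nonneg_left (by linarith) hQ.le
        _ = (2*R*(a+2*q)^q/c^c) * (n:ℝ)^(q-c-1) := by
            rw [show q-c-1 = q-(c+1) by ring, Real.rpow_sub hn0,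
              show (n:ℝ)^(c+1) = (n:ℝ)^c*(n:ℝ) by rw [Real.rpow_add hn0, Real.rpow_one]]
            field_simp
    have hlim : Filter.Tendsto (fun n : ℕ => (2*R*(a+2*q)^q/c^c) * (n:ℝ)^(q-c-1))
        Filter.atTop (nhds 0) := by
      have h1 : Filter.Tendsto (fun y : ℝ => y ^ (q-c-1)) Filter.atTop (nhds 0) := by
        rw [show q-c-1 = -(c+1-q) by ring]
        exact tendsto_rpow_neg_atTop (by linarith)
      have h2 := (h1.comp tendsto_natCast_atTop_atTop).const_mul (2*R*(a+2*q)^q/c^c)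
      rw [mul_zero] at h2
      exact h2
    refine squeeze_zero' (Filter.Eventually.of_forall hφnn) ?_ hlim
    exact Filter.eventually_atTop.2 ⟨1, hbound⟩
  -- main ratio bound
  have hkey : ∀ᶠ n : ℕ in Filter.atTop, f (n+1) ≤ φ n * f n := by
    have hev : ∀ᶠ n : ℕ in Filter.atTop, (1:ℝ) ≤ b + c*n := by
      have ht : Filter.Tendsto (fun n : ℕ => b + c*(n:ℝ)) Filter.atTop Filter.atTop := by
        refine Filter.tendsto_atTop_add_const_left _ b ?_
        exact (tendsto_natCast_atTop_atTop).const_mul_atTop hc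
      exact ht.eventually_ge_atTop 1
    filter_upwards [hev] with n hn
    have hga : (0:ℝ) < a + q*n := by positivity
    have hgb : (0:ℝ) < b + c*n := by positivity
    have hGa := Real.Gamma_pos_of_pos hga
    have hGb := Real.Gamma_pos_of_pos hgb
    have hup : Real.Gamma (a + q*((n:ℝ)+1)) ≤ Real.Gamma (a+q*n) * (a+q*n+q)^q := by
      rw [show a + q*((n:ℝ)+1) = (a + q*(n:ℝ)) + q by ring]
      exact Gamma_ratio_upper hga hq.le
    have hdown : Real.Gamma (b+c*n) * (b+c*n)^c / 2 ≤ Real.Gamma (b + c*((n:ℝ)+1)) := by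
      rw [show b + c*((n:ℝ)+1) = (b + c*(n:ℝ)) + c by ring]
      exact Gamma_ratio_lower hn hc.le
    have hfact : (((n+1).factorial:ℕ) : ℝ) = ((n:ℝ)+1) * n.factorial := by
      rw [Nat.factorial_succ]; push_cast; ring
    have hQ : (0:ℝ) < (b+c*n)^c := Real.rpow_pos_of_pos hgb _
    have hP : (0:ℝ) ≤ (a+q*n+q)^q := Real.rpow_nonneg (by positivity) _
    have hnf : (0:ℝ) < (n.factorial:ℝ) := by exact_mod_cast n.factorial_pos
    have hRn : (0:ℝ) ≤ R^(n+1) := pow_nonneg hR _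
    have hdpos : (0:ℝ) < (Real.Gamma (b+c*n) * (b+c*n)^c / 2) * (((n:ℝ)+1) * n.factorial) := by
      positivity
    have hden2 : (Real.Gamma (b+c*n) * (b+c*n)^c / 2) * (((n:ℝ)+1) * n.factorial)
        ≤ Real.Gamma (b + c*((n:ℝ)+1)) * (((n+1).factorial:ℕ) : ℝ) := by
      rw [hfact]
      exact mul_le_mul_of_nonneg_right hdown (by positivity)
    have hfn1 : f (n+1) = Real.Gamma (a + q*((n:ℝ)+1)) * R^(n+1) /
        (Real.Gamma (b + c*((n:ℝ)+1)) * (((n+1).factorial:ℕ) : ℝ)) := by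
      rw [hf]
      push_cast
      ring_nf
    rw [hfn1]
    calc Real.Gamma (a + q*((n:ℝ)+1)) * R^(n+1) /
        (Real.Gamma (b + c*((n:ℝ)+1)) * (((n+1).factorial:ℕ) : ℝ))
        ≤ (Real.Gamma (a+q*n) * (a+q*n+q)^q) * R^(n+1) /
          ((Real.Gamma (b+c*n) * (b+c*n)^c / 2) * (((n:ℝ)+1) * n.factorial)) :=
          div_le_div₀ (by positivity) (mul_le_mul_of_nonneg_right hup hRn) hdpos hden2
      _ = φ n * f n := by
          rw [hφ, hf]
          simp only []
          rw [pow_succ]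
          field_simp
  -- conclude by ratio test
  refine summable_of_ratio_norm_eventually_le (r := 1/2) (by norm_num) ?_
  have hφhalf : ∀ᶠ n : ℕ in Filter.atTop, φ n ≤ 1/2 :=
    (hφ0.eventually_lt_const (by norm_num : (0:ℝ) < 1/2)).mono fun n h => h.le
  filter_upwards [hkey, hφhalf] with n h1 h2
  rw [Real.norm_of_nonneg (hfnn _), Real.norm_of_nonneg (hfnn _)]
  calc f (n+1) ≤ φ n * f n := h1
    _ ≤ (1/2) * f n := mul_le_mul_of_nonneg_right h2 (hfnn n)

end

lemma cpow_mul_nat {w a : ℂ} (hw : w ≠ 0) (n : ℕ) : w ^ (a * n) = (w ^ a) ^ n := by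
  induction n with
  | zero => simp
  | succ n ih =>
    rw [pow_succ, ← ih, ← Complex.cpow_add _ _ hw]
    congr 1
    push_cast
    ring

lemma integrableOn_beta_interval {t x : ℝ} (htx : t < x) {u v : ℂ}
    (hu : 0 < u.re) (hv : 0 < v.re) :
    IntegrableOn (fun s : ℝ => ((s - t : ℝ) : ℂ) ^ (u - 1) * ((x - s : ℝ) : ℂ) ^ (v - 1))
      (Ioc t x) := by
  set X := x - t with hXdef
  have hX : 0 < X := by simp [hXdef]; linarith
  have I1 := (Complex.betaIntegral_convergent hu hv).comp_mul_left (c := X⁻¹)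
  rw [show (0:ℝ) / X⁻¹ = 0 by simp, show (1:ℝ) / X⁻¹ = X by field_simp] at I1
  have I2 := I1.comp_sub_right t
  rw [zero_add, show X + t = x by rw [hXdef]; ring] at I2
  have I3 := (I2.const_mul ((X:ℂ) ^ (u-1) * (X:ℂ) ^ (v-1)))
  rw [intervalIntegrable_iff_integrableOn_Ioc_of_le htx.le] at I3
  refine I3.congr_fun (fun s hs => ?_) measurableSet_Ioc
  obtain ⟨hs1, hs2⟩ := hs
  have hst : 0 < s - t := by linarith
  have hy0 : 0 ≤ X⁻¹ * (s - t) := by positivity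
  have hy1 : X⁻¹ * (s - t) ≤ 1 := by
    rw [inv_mul_le_iff₀ hX, mul_one, hXdef]
    linarith
  have e1 : (X:ℂ) ^ (u-1) * ((X⁻¹ * (s - t) : ℝ) : ℂ) ^ (u-1) = ((s - t : ℝ) : ℂ) ^ (u-1) := by
    rw [← Complex.mul_cpow_ofReal_nonneg hX.le hy0]
    have h7 : X * (X⁻¹ * (s - t)) = s - t := by
      rw [← mul_assoc, mul_inv_cancel₀ hX.ne', one_mul]
    rw [← Complex.ofReal_mul, h7]
  have e2 : (X:ℂ) ^ (v-1) * ((1 - X⁻¹ * (s - t) : ℝ) : ℂ) ^ (v-1)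
      = ((x - s : ℝ) : ℂ) ^ (v-1) := by
    rw [← Complex.mul_cpow_ofReal_nonneg hX.le (by linarith)]
    have h7 : X * (1 - X⁻¹ * (s - t)) = x - s := by
      rw [mul_sub, mul_one, ← mul_assoc, mul_inv_cancel₀ hX.ne', one_mul, hXdef]
      ring
    rw [← Complex.ofReal_mul, h7]
  calc (X:ℂ) ^ (u-1) * (X:ℂ) ^ (v-1) *
        (((X⁻¹ * (s - t) : ℝ) : ℂ) ^ (u-1) * (1 - ((X⁻¹ * (s - t) : ℝ) : ℂ)) ^ (v-1))
      = ((X:ℂ) ^ (u-1) * ((X⁻¹ * (s - t) : ℝ) : ℂ) ^ (u-1)) *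
        ((X:ℂ) ^ (v-1) * ((1 - X⁻¹ * (s - t) : ℝ) : ℂ) ^ (v-1)) := by
        push_cast
        ring
    _ = ((s - t : ℝ) : ℂ) ^ (u-1) * ((x - s : ℝ) : ℂ) ^ (v-1) := by rw [e1, e2]

set_option maxHeartbeats 2000000 in
/-- Euler type integral over `[t, x]` of the Shukla–Prajapati generalized
Mittag-Leffler function. -/
theorem euler_integral_spML_interval
    (α β γ ρ : ℂ) (hα : 0 < α.re) (hβ : 0 < β.re) (hγ : 0 < γ.re) (hρ : 0 < ρ.re)
    (q : ℝ) (hq : 0 < q) (hqα : q < α.re + 1)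
    (t x : ℝ) (htx : t < x) (z : ℂ) :
    (1 / Complex.Gamma ρ) *
      (∫ s in t..x, ((x - s : ℝ) : ℂ) ^ (ρ - 1) * ((s - t : ℝ) : ℂ) ^ (β - 1) *
        spML α β γ q (z * ((s - t : ℝ) : ℂ) ^ α)) =
      ∑' n : ℕ, ((x - t : ℝ) : ℂ) ^ (ρ + β + n * α - 1) *
        pochG γ ((q * n : ℝ) : ℂ) * z ^ n /
        ((n.factorial : ℂ) * Complex.Gamma (ρ + β + α * n)) := by
  set X := x - t with hXdef
  have hX : 0 < X := sub_pos.2 htx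
  have hXc : ((X:ℝ):ℂ) ≠ 0 := Complex.ofReal_ne_zero.2 hX.ne'
  -- coefficients and summands
  set Kc : ℕ → ℂ := fun n => pochG γ ((q * n : ℝ) : ℂ) * z ^ n /
      (Complex.Gamma (α * n + β) * (n.factorial : ℂ)) with hKc
  set h : ℕ → ℝ → ℂ := fun n s => Kc n *
      (((s - t : ℝ) : ℂ) ^ (β + α * n - 1) * ((x - s : ℝ) : ℂ) ^ (ρ - 1)) with hh
  have hren : ∀ n : ℕ, (β + α * (n:ℂ)).re = β.re + α.re * n := by
    intro n
    simp [Complex.add_re, Complex.mul_re]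
  have hren' : ∀ n : ℕ, (α * (n:ℂ) + β).re = α.re * n + β.re := by
    intro n
    simp [Complex.add_re, Complex.mul_re]
  have hrepos : ∀ n : ℕ, 0 < (β + α * (n:ℂ)).re := by
    intro n; rw [hren]; positivity
  have hrepos' : ∀ n : ℕ, 0 < (α * (n:ℂ) + β).re := by
    intro n; rw [hren']; positivity
  -- pointwise expansion of the integrand as a tsum
  have hpt : ∀ s ∈ Set.Ioc t x,
      ((x - s : ℝ) : ℂ) ^ (ρ - 1) * ((s - t : ℝ) : ℂ) ^ (β - 1) *
        spML α β γ q (z * ((s - t : ℝ) : ℂ) ^ α) = ∑' n : ℕ, h n s := by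
    intro s hs
    have hst : (0:ℝ) < s - t := by linarith [hs.1]
    have hW : ((s - t:ℝ):ℂ) ≠ 0 := Complex.ofReal_ne_zero.2 hst.ne'
    rw [spML, ← tsum_mul_left]
    refine tsum_congr fun n => ?_
    rw [hh, hKc]
    simp only []
    rw [mul_pow, ← cpow_mul_nat hW n]
    have hsplit : ((s-t:ℝ):ℂ) ^ (β + α*(n:ℂ) - 1)
        = ((s-t:ℝ):ℂ)^(β-1) * ((s-t:ℝ):ℂ)^(α*(n:ℂ)) := by
      rw [← Complex.cpow_add _ _ hW]
      congr 1
      ring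
    rw [hsplit]
    ring
  -- integrability of each summand
  have hbin : ∀ n : ℕ, MeasureTheory.IntegrableOn
      (fun s : ℝ => ((s - t : ℝ) : ℂ) ^ (β + α * (n:ℂ) - 1) * ((x - s : ℝ) : ℂ) ^ (ρ - 1))
      (Set.Ioc t x) := fun n => integrableOn_beta_interval htx (hrepos n) hρ
  have hint : ∀ n : ℕ, MeasureTheory.IntegrableOn (h n) (Set.Ioc t x) := by
    intro n
    rw [hh]
    exact (hbin n).const_mul (Kc n)
  -- value of each integral
  have hval : ∀ n : ℕ, (∫ s in Set.Ioc t x, h n s) =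
      Kc n * (((X:ℝ):ℂ) ^ (β + α*(n:ℂ) + ρ - 1) * Complex.betaIntegral (β + α*(n:ℂ)) ρ) := by
    intro n
    rw [← intervalIntegral.integral_of_le htx.le]
    have e1 : (∫ s in t..x, h n s) = Kc n *
        ∫ s in t..x, (((s - t:ℝ):ℂ) ^ (β + α*(n:ℂ) - 1) * ((x - s:ℝ):ℂ) ^ (ρ - 1)) := by
      rw [hh]
      exact intervalIntegral.integral_const_mul _ _
    have e2 : (∫ u in (0:ℝ)..X,
          (((u + t - t:ℝ):ℂ) ^ (β + α*(n:ℂ) - 1) * ((x - (u + t):ℝ):ℂ) ^ (ρ - 1))) =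
        ∫ s in t..x, (((s - t:ℝ):ℂ) ^ (β + α*(n:ℂ) - 1) * ((x - s:ℝ):ℂ) ^ (ρ - 1)) := by
      rw [intervalIntegral.integral_comp_add_right
        (fun s => (((s - t:ℝ):ℂ) ^ (β + α*(n:ℂ) - 1) * ((x - s:ℝ):ℂ) ^ (ρ - 1))) t,
        zero_add, hXdef, sub_add_cancel]
    have e3 : (∫ u in (0:ℝ)..X,
          (((u + t - t:ℝ):ℂ) ^ (β + α*(n:ℂ) - 1) * ((x - (u + t):ℝ):ℂ) ^ (ρ - 1))) =
        ∫ u in (0:ℝ)..X, ((u:ℝ):ℂ) ^ (β + α*(n:ℂ) - 1) * (((X:ℝ):ℂ) - ((u:ℝ):ℂ)) ^ (ρ - 1) := by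
      refine intervalIntegral.integral_congr fun u _ => ?_
      have c1 : u + t - t = u := by ring
      have c2 : x - (u + t) = X - u := by rw [hXdef]; ring
      rw [c1, c2]
      congr 1
      push_cast
      ring_nf
    rw [e1, ← e2, e3, Complex.betaIntegral_scaled (β + α*(n:ℂ)) ρ hX]
  -- norm bound for each integral
  set Bi : ℝ → ℂ := fun s => ((s - t:ℝ):ℂ) ^ (β - 1) * ((x - s:ℝ):ℂ) ^ (ρ - 1) with hBi
  have hbi0 : MeasureTheory.IntegrableOn Bi (Set.Ioc t x) :=
    integrableOn_beta_interval htx hβ hρ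
  set C₀ : ℝ := ∫ s in Set.Ioc t x, ‖Bi s‖ with hC₀
  have hC₀nn : 0 ≤ C₀ := MeasureTheory.integral_nonneg fun _ => norm_nonneg _
  have hnormle : ∀ n : ℕ, (∫ s in Set.Ioc t x, ‖h n s‖) ≤ ‖Kc n‖ * (X ^ (α.re * n) * C₀) := by
    intro n
    have heq : (∫ s in Set.Ioc t x, ‖h n s‖) = ‖Kc n‖ *
        ∫ s in Set.Ioc t x, ‖((s - t:ℝ):ℂ) ^ (β + α*(n:ℂ) - 1) * ((x - s:ℝ):ℂ) ^ (ρ - 1)‖ := by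
      rw [← MeasureTheory.integral_const_mul]
      refine MeasureTheory.integral_congr_ae (Filter.Eventually.of_forall fun s => ?_)
      rw [hh]
      simp [norm_mul]
    rw [heq]
    refine mul_le_mul_of_nonneg_left ?_ (norm_nonneg _)
    have hmono : ∀ s ∈ Set.Ioc t x,
        ‖((s - t:ℝ):ℂ) ^ (β + α*(n:ℂ) - 1) * ((x - s:ℝ):ℂ) ^ (ρ - 1)‖
          ≤ X ^ (α.re * n) * ‖Bi s‖ := by
      intro s hs
      have hst : (0:ℝ) < s - t := by linarith [hs.1]
      have hsX : s - t ≤ X := by rw [hXdef]; linarith [hs.2]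
      rw [hBi]
      simp only [norm_mul]
      rw [← mul_assoc, mul_comm (X ^ (α.re * n))]
      refine mul_le_mul_of_nonneg_right ?_ (norm_nonneg _)
      rw [Complex.norm_cpow_eq_rpow_re_of_pos hst, Complex.norm_cpow_eq_rpow_re_of_pos hst]
      have hre1 : (β + α*(n:ℂ) - 1).re = (β.re - 1) + α.re * n := by
        simp [Complex.sub_re, hren n]
        ring
      have hre2 : (β - 1).re = β.re - 1 := by simp
      rw [hre1, hre2, Real.rpow_add hst]
      refine mul_le_mul_of_nonneg_left ?_ (Real.rpow_nonneg hst.le _)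
      exact Real.rpow_le_rpow hst.le hsX (by positivity)
    calc (∫ s in Set.Ioc t x, ‖((s - t:ℝ):ℂ) ^ (β + α*(n:ℂ) - 1) * ((x - s:ℝ):ℂ) ^ (ρ - 1)‖)
        ≤ ∫ s in Set.Ioc t x, X ^ (α.re * n) * ‖Bi s‖ := by
          refine MeasureTheory.setIntegral_mono_on ((hbin n).norm) ?_ measurableSet_Ioc hmono
          exact (hbi0.norm).const_mul _
      _ = X ^ (α.re * n) * C₀ := by rw [MeasureTheory.integral_const_mul, hC₀]
  -- summability of the coefficient majorant
  set R : ℝ := ‖z‖ * X ^ α.re * Real.exp (2 * α.im^2 / α.re) with hRdef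
  have hRnn : 0 ≤ R := by positivity
  have hsum0 : Summable (fun n : ℕ => Real.Gamma (γ.re + q*n) * R^n /
      (Real.Gamma (β.re + α.re*n) * n.factorial)) :=
    summable_gamma_ratio hγ hβ hα hq hqα hRnn
  have hGγ : Complex.Gamma γ ≠ 0 := Complex.Gamma_ne_zero_of_re_pos hγ
  have hGγn : 0 < ‖Complex.Gamma γ‖ := norm_pos_iff.2 hGγ
  set M : ℝ := Real.exp (β.im^2) / ‖Complex.Gamma γ‖ with hM
  have hMsum : Summable (fun n : ℕ => M * (Real.Gamma (γ.re + q*n) * R^n /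
      (Real.Gamma (β.re + α.re*n) * n.factorial)) * C₀) := (hsum0.mul_left M).mul_right C₀
  have hev : ∀ᶠ n : ℕ in Filter.atTop, ‖Kc n‖ * (X ^ (α.re * n) * C₀) ≤
      M * (Real.Gamma (γ.re + q*n) * R^n /
        (Real.Gamma (β.re + α.re*n) * n.factorial)) * C₀ := by
    have htend : Filter.Tendsto (fun n : ℕ => α.re*(n:ℝ)) Filter.atTop Filter.atTop :=
      tendsto_natCast_atTop_atTop.const_mul_atTop hα
    have hev1 := (Filter.tendsto_atTop_add_const_right _ β.re htend).eventually_ge_atTop 2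
    have hev2 := htend.eventually_ge_atTop (2*(1-β.re))
    filter_upwards [hev1, hev2, Filter.eventually_ge_atTop 1] with n h1 h2 h3
    have hn1 : (1:ℝ) ≤ (n:ℝ) := by exact_mod_cast h3
    have hn0 : (0:ℝ) < (n:ℝ) := by linarith
    rw [← mul_assoc]
    refine mul_le_mul_of_nonneg_right ?_ hC₀nn
    -- the key coefficient bound
    set r2 : ℝ := Real.exp (2 * α.im^2 / α.re) with hr2
    have hr2pos : 0 < r2 := Real.exp_pos _
    have hG2 : Complex.Gamma (α*(n:ℂ)+β) ≠ 0 := Complex.Gamma_ne_zero_of_re_pos (hrepos' n)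
    have hGpos : 0 < ‖Complex.Gamma (α*(n:ℂ)+β)‖ := norm_pos_iff.2 hG2
    have hsn : (α*(n:ℂ)+β).re = α.re*n+β.re := hren' n
    have hsnim : (α*(n:ℂ)+β).im = α.im*n+β.im := by
      simp [Complex.add_im, Complex.mul_im]
    have hlow := Gamma_re_le_norm_mul_exp (s := α*(n:ℂ)+β) (by rw [hsn]; exact h1)
    rw [hsn, hsnim] at hlow
    have hexple : Real.exp ((α.im*n+β.im)^2/(2*(α.re*n+β.re-1))) ≤
        Real.exp (β.im^2) * r2 ^ n := by
      rw [hr2, ← Real.exp_nat_mul, ← Real.exp_add]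
      refine Real.exp_le_exp.2 ?_
      have hd1 : (1:ℝ) ≤ α.re*n+β.re-1 := by linarith
      have hd2 : α.re*(n:ℝ)/2 ≤ α.re*n+β.re-1 := by linarith
      rw [div_le_iff₀ (by linarith : (0:ℝ) < 2*(α.re*n+β.re-1))]
      have hAn : (0:ℝ) < α.re * n := by positivity
      have key1 : (α.im*n+β.im)^2 ≤ 2*(α.im*n)^2 + 2*β.im^2 := by
        nlinarith [sq_nonneg (α.im*n - β.im)]
      have key2 : 2*β.im^2 ≤ 2*β.im^2*(α.re*n+β.re-1) := by nlinarith [sq_nonneg β.im]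
      have key3 : 2*(α.im*(n:ℝ))^2 = ((n:ℝ)*(2*α.im^2/α.re)) * (2*(α.re*n/2)) := by
        field_simp
      have key4 : ((n:ℝ)*(2*α.im^2/α.re)) * (2*(α.re*(n:ℝ)/2)) ≤
          ((n:ℝ)*(2*α.im^2/α.re)) * (2*(α.re*n+β.re-1)) := by
        refine mul_le_mul_of_nonneg_left (by linarith) (by positivity)
      nlinarith
    have hlow2 : Real.Gamma (α.re*n+β.re) ≤
        ‖Complex.Gamma (α*(n:ℂ)+β)‖ * (Real.exp (β.im^2) * r2^n) :=
      hlow.trans (mul_le_mul_of_nonneg_left hexple hGpos.le)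
    have hupG : ‖Complex.Gamma (γ + ((q*n:ℝ):ℂ))‖ ≤ Real.Gamma (γ.re + q*n) := by
      have hre : (γ + ((q*n:ℝ):ℂ)).re = γ.re + q*n := by simp
      have := norm_Gamma_le (s := γ + ((q*n:ℝ):ℂ)) (by rw [hre]; positivity)
      rwa [hre] at this
    have hKcnorm : ‖Kc n‖ = ‖Complex.Gamma (γ + ((q*n:ℝ):ℂ))‖/‖Complex.Gamma γ‖ * ‖z‖^n /
        (‖Complex.Gamma (α*(n:ℂ)+β)‖ * n.factorial) := by
      rw [hKc]
      simp only []
      rw [norm_div, norm_mul, norm_mul, norm_pow, pochG, norm_div, Complex.norm_natCast]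
    have hXpow : X ^ (α.re*(n:ℝ)) = (X ^ α.re)^n := by
      rw [Real.rpow_mul hX.le, Real.rpow_natCast]
    have hfacpos : (0:ℝ) < (n.factorial:ℝ) := by exact_mod_cast n.factorial_pos
    have hΓr2pos : (0:ℝ) < Real.Gamma (β.re + α.re*n) := Real.Gamma_pos_of_pos (by positivity)
    have hΓr1pos : (0:ℝ) < Real.Gamma (γ.re + q*n) := Real.Gamma_pos_of_pos (by positivity)
    rw [hKcnorm, hXpow]
    rw [hM, div_mul_div_comm]
    have hcomm : Real.Gamma (α.re*(n:ℝ)+β.re) = Real.Gamma (β.re + α.re*n) := by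
      rw [add_comm]
    rw [hcomm] at hlow2
    have hlhs : ‖Complex.Gamma (γ + ((q*n:ℝ):ℂ))‖/‖Complex.Gamma γ‖ * ‖z‖^n /
        (‖Complex.Gamma (α*(n:ℂ)+β)‖ * n.factorial) * (X ^ α.re)^n =
        (‖Complex.Gamma (γ + ((q*n:ℝ):ℂ))‖ * (‖z‖^n * (X ^ α.re)^n)) /
        (‖Complex.Gamma γ‖ * (‖Complex.Gamma (α*(n:ℂ)+β)‖ * n.factorial)) := by
      field_simp
    rw [hlhs]
    rw [div_le_div_iff₀ (by positivity) (by positivity)]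
    have hXra : (0:ℝ) ≤ (X ^ α.re)^n := by positivity
    have hzX : (0:ℝ) ≤ ‖z‖^n * (X ^ α.re)^n := by positivity
    have hstep : (‖Complex.Gamma (γ + ((q*n:ℝ):ℂ))‖ * (‖z‖^n * (X ^ α.re)^n)) *
        Real.Gamma (β.re + α.re*n) ≤
        (Real.Gamma (γ.re + q*n) * (‖z‖^n * (X ^ α.re)^n)) *
        (‖Complex.Gamma (α*(n:ℂ)+β)‖ * (Real.exp (β.im^2) * r2^n)) := by
      refine mul_le_mul ?_ hlow2 hΓr2pos.le (by positivity)
      exact mul_le_mul_of_nonneg_right hupG hzX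
    have hRn : R^n = ‖z‖^n * (X ^ α.re)^n * r2^n := by
      rw [hRdef, hr2, mul_pow, mul_pow]
    calc ‖Complex.Gamma (γ + ((q*n:ℝ):ℂ))‖ * (‖z‖^n * (X ^ α.re)^n) *
          (‖Complex.Gamma γ‖ * (Real.Gamma (β.re + α.re*n) * n.factorial))
        = ((‖Complex.Gamma (γ + ((q*n:ℝ):ℂ))‖ * (‖z‖^n * (X ^ α.re)^n)) *
            Real.Gamma (β.re + α.re*n)) * (‖Complex.Gamma γ‖ * n.factorial) := by ring
      _ ≤ ((Real.Gamma (γ.re + q*n) * (‖z‖^n * (X ^ α.re)^n)) *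
            (‖Complex.Gamma (α*(n:ℂ)+β)‖ * (Real.exp (β.im^2) * r2^n))) *
          (‖Complex.Gamma γ‖ * n.factorial) := by
          refine mul_le_mul_of_nonneg_right hstep (by positivity)
      _ = Real.exp (β.im^2) * (Real.Gamma (γ.re + q*n) * R^n) *
          (‖Complex.Gamma γ‖ * (‖Complex.Gamma (α*(n:ℂ)+β)‖ * n.factorial)) := by
          rw [hRn]
          ring
  -- summability of integral norms
  have hsum : Summable (fun n : ℕ => ∫ s in Set.Ioc t x, ‖h n s‖) := by
    obtain ⟨N, hN⟩ := Filter.eventually_atTop.1 hev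
    have hmaj : Summable (fun n : ℕ => ‖Kc n‖ * (X ^ (α.re*n) * C₀)) := by
      rw [← summable_nat_add_iff N]
      refine Summable.of_nonneg_of_le
        (fun k => mul_nonneg (norm_nonneg _)
          (mul_nonneg (Real.rpow_nonneg hX.le _) hC₀nn))
        (fun k => hN (k+N) (Nat.le_add_left N k)) ?_
      exact (summable_nat_add_iff N).2 hMsum
    refine Summable.of_nonneg_of_le
      (fun n => MeasureTheory.integral_nonneg fun s => norm_nonneg _) hnormle hmaj
  -- swap sum and integral, conclude
  rw [intervalIntegral.integral_of_le htx.le]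
  rw [MeasureTheory.setIntegral_congr_fun measurableSet_Ioc (fun s hs => hpt s hs)]
  rw [← MeasureTheory.integral_tsum_of_summable_integral_norm hint hsum]
  rw [← tsum_mul_left]
  refine tsum_congr fun n => ?_
  rw [hval n]
  have hu := hrepos n
  have hΓρ : Complex.Gamma ρ ≠ 0 := Complex.Gamma_ne_zero_of_re_pos hρ
  have hΓ2 : Complex.Gamma (β + α*(n:ℂ) + ρ) ≠ 0 := by
    refine Complex.Gamma_ne_zero_of_re_pos ?_
    rw [Complex.add_re]
    exact add_pos hu hρ
  have hBeq : Complex.betaIntegral (β + α*(n:ℂ)) ρ =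
      Complex.Gamma (β + α*(n:ℂ)) * Complex.Gamma ρ / Complex.Gamma (β + α*(n:ℂ) + ρ) := by
    have h0 := Complex.Gamma_mul_Gamma_eq_betaIntegral hu hρ
    field_simp
    linear_combination h0.symm
  rw [hBeq, hKc]
  simp only []
  have hΓ1 : Complex.Gamma (α*(n:ℂ)+β) ≠ 0 := Complex.Gamma_ne_zero_of_re_pos (hrepos' n)
  have hfac : ((n.factorial:ℕ):ℂ) ≠ 0 := Nat.cast_ne_zero.2 n.factorial_pos.ne'
  have hxe : ((X:ℝ):ℂ)^(ρ+β+(n:ℂ)*α-1) = ((X:ℝ):ℂ)^(β+α*(n:ℂ)+ρ-1) := by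
    rw [show ρ+β+(n:ℂ)*α-1 = β+α*(n:ℂ)+ρ-1 by ring]
  have hgam : Complex.Gamma (ρ+β+α*(n:ℂ)) = Complex.Gamma (β+α*(n:ℂ)+ρ) := by
    rw [show ρ+β+α*(n:ℂ) = β+α*(n:ℂ)+ρ by ring]
  have hgam2 : Complex.Gamma (α*(n:ℂ)+β) = Complex.Gamma (β+α*(n:ℂ)) := by
    rw [show α*(n:ℂ)+β = β+α*(n:ℂ) by ring]
  rw [hxe, hgam, hgam2]
  have hΓ1' : Complex.Gamma (β + α*(n:ℂ)) ≠ 0 := hgam2 ▸ hΓ1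
  field_simp
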